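/- Let q be a bivariate polynomial of degree k ≤ n defining an algebraic curve without multiple components (i.e., q is squarefree). Then any subset of the zero set of q containing more than d(n,k) = N_n − N_{n−k} points is n-dependent. -/

import Mathlib

open MvPolynomial
open scoped Classical

/-- Evaluation of a bivariate polynomial at a point of the plane. -/
noncomputable def evalPt (p : MvPolynomial (Fin 2) ℝ) (A : ℝ × ℝ) : ℝ :=
  MvPolynomial.eval ![A.1, A.2] p

/-- `p` is an `n`-fundamental polynomial of the node `A` with respect to the node set `X`. -/
def IsFund (n : ℕ) (X : Finset (ℝ × ℝ)) (A : ℝ × ℝ)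
    (p : MvPolynomial (Fin 2) ℝ) : Prop :=
  p.totalDegree ≤ n ∧ evalPt p A = 1 ∧ ∀ B ∈ X, B ≠ A → evalPt p B = 0

/-- The node set `X` is `n`-independent. -/
def Indep (n : ℕ) (X : Finset (ℝ × ℝ)) : Prop :=
  ∀ A ∈ X, ∃ p, IsFund n X A p

/-- `d(n,k) = N_n - N_{n-k} = k(2n+3-k)/2`. -/
def dd (n k : ℕ) : ℕ := k * (2 * n + 3 - k) / 2

/-- The node set `X` is `n`-poised. -/
def Poised (n : ℕ) (X : Finset (ℝ × ℝ)) : Prop :=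
  X.card = (n + 1) * (n + 2) / 2 ∧
  ∀ p : MvPolynomial (Fin 2) ℝ, p.totalDegree ≤ n →
    (∀ A ∈ X, evalPt p A = 0) → p = 0

/-- The space of polynomials of total degree at most `n` vanishing on `X`. -/
noncomputable def vanishSp (n : ℕ) (X : Finset (ℝ × ℝ)) :
    Submodule ℝ (MvPolynomial (Fin 2) ℝ) :=
  MvPolynomial.restrictTotalDegree (Fin 2) ℝ n ⊓
    ⨅ A ∈ X, LinearMap.ker ((MvPolynomial.aeval (R := ℝ) ![A.1, A.2]).toLinearMap)

/-! ### Auxiliary counting lemmas -/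

/-- The finset of pairs of naturals with sum at most `m`. -/
def Tset (m : ℕ) : Finset (ℕ × ℕ) := (Finset.range (m+1)).biUnion (fun s => Finset.HasAntidiagonal.antidiagonal s)

lemma mem_Tset (m : ℕ) (p : ℕ × ℕ) : p ∈ Tset m ↔ p.1 + p.2 ≤ m := by
  simp only [Tset, Finset.mem_biUnion, Finset.mem_range, Finset.HasAntidiagonal.mem_antidiagonal]
  constructor
  · rintro ⟨s, hs, rfl⟩; omega
  · intro h; exact ⟨p.1 + p.2, by omega, rfl⟩

lemma card_Tset (m : ℕ) : (Tset m).card = (m+1)*(m+2)/2 := by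
  rw [Tset, Finset.card_biUnion]
  · have h1 : ∀ s ∈ Finset.range (m+1), (Finset.HasAntidiagonal.antidiagonal s).card = s + 1 := by
      intro s _; exact Finset.Nat.card_antidiagonal s
    rw [Finset.sum_congr rfl h1]
    have h2 : ∑ s ∈ Finset.range (m+2), s = (∑ s ∈ Finset.range (m+1), (s+1)) + 0 :=
      Finset.sum_range_succ' id (m+1)
    have h3 := Finset.sum_range_id_mul_two (m+2)
    have h4 : (m+2) - 1 = m + 1 := rfl
    rw [h4] at h3
    have h5 : (m+1)*(m+2)/2 * 2 = (m+1)*(m+2) :=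
      Nat.div_mul_cancel (Nat.even_mul_succ_self (m+1)).two_dvd
    have h6 : (m+2)*(m+1) = (m+1)*(m+2) := Nat.mul_comm _ _
    omega
  · intro x hx y hy hxy
    simp only [Finset.disjoint_left]
    intro a ha ha'
    rw [Finset.HasAntidiagonal.mem_antidiagonal] at ha ha'
    omega

lemma finsupp_sum_two (d : Fin 2 →₀ ℕ) : (d.sum fun _ e => e) = d 0 + d 1 := by
  rw [Finsupp.sum_fintype _ _ (fun _ => rfl), Fin.sum_univ_two]

noncomputable def degEquiv (m : ℕ) :
    {d : Fin 2 →₀ ℕ // (d.sum fun _ e => e) ≤ m} ≃ {p : ℕ × ℕ // p.1 + p.2 ≤ m} where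
  toFun d := ⟨(d.1 0, d.1 1), by have := d.2; rwa [finsupp_sum_two] at this⟩
  invFun p := ⟨Finsupp.equivFunOnFinite.symm ![p.1.1, p.1.2], by
    rw [finsupp_sum_two]
    simpa using p.2⟩
  left_inv d := by
    ext i
    simp only [Finsupp.coe_equivFunOnFinite_symm]
    fin_cases i <;> simp
  right_inv p := by
    ext <;> simp

lemma finrank_rtd (m : ℕ) :
    Module.finrank ℝ (restrictTotalDegree (Fin 2) ℝ m) = (m+1)*(m+2)/2 := by
  classical
  have e1 : {p : ℕ × ℕ // p.1 + p.2 ≤ m} ≃ {p // p ∈ Tset m} :=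
    Equiv.subtypeEquivRight (fun p => (mem_Tset m p).symm)
  have e : ↥{d : Fin 2 →₀ ℕ | (d.sum fun _ e => e) ≤ m} ≃ {p // p ∈ Tset m} :=
    (degEquiv m).trans e1
  have : Fintype ↥{d : Fin 2 →₀ ℕ | (d.sum fun _ e => e) ≤ m} := Fintype.ofEquiv _ e.symm
  have b : Module.Basis ↥{d : Fin 2 →₀ ℕ | (d.sum fun _ e => e) ≤ m} ℝ
      (restrictTotalDegree (Fin 2) ℝ m) :=
    basisRestrictSupport ℝ _
  rw [Module.finrank_eq_card_basis b, Fintype.card_congr e, Fintype.card_coe, card_Tset]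

lemma aeval_eq_evalPt (A : ℝ × ℝ) (p : MvPolynomial (Fin 2) ℝ) :
    MvPolynomial.aeval (R := ℝ) ![A.1, A.2] p = evalPt p A := rfl

theorem stmt6 (n k : ℕ) (hk : k ≤ n) (q : MvPolynomial (Fin 2) ℝ)
    (hq : q.totalDegree = k) (hsf : Squarefree q)
    (X : Finset (ℝ × ℝ)) (hXq : ∀ A ∈ X, evalPt q A = 0)
    (hcard : dd n k < X.card) :
    ¬ Indep n X := by
  intro hInd
  classical
  have hq0 : q ≠ 0 := by
    intro h; subst h; exact not_squarefree_zero hsf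
  set V := restrictTotalDegree (Fin 2) ℝ n with hVdef
  set V' := restrictTotalDegree (Fin 2) ℝ (n - k) with hV'def
  -- the evaluation map
  let E : V →ₗ[ℝ] (↥X → ℝ) :=
    LinearMap.pi (fun A : ↥X =>
      (MvPolynomial.aeval (R := ℝ) ![A.1.1, A.1.2]).toLinearMap ∘ₗ V.subtype)
  have hE : ∀ (v : V) (A : ↥X), E v A = evalPt (v : MvPolynomial (Fin 2) ℝ) A.1 := by
    intro v A
    simp only [E, LinearMap.pi_apply, LinearMap.comp_apply, Submodule.subtype_apply,
      AlgHom.toLinearMap_apply]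
    exact aeval_eq_evalPt A.1 _
  -- multiplication by q
  have hmul : ∀ r : V', q * (r : MvPolynomial (Fin 2) ℝ) ∈ V := by
    intro r
    rw [hVdef, mem_restrictTotalDegree]
    have h1 : (r : MvPolynomial (Fin 2) ℝ).totalDegree ≤ n - k :=
      (mem_restrictTotalDegree _ _ _).mp r.2
    calc (q * (r : MvPolynomial (Fin 2) ℝ)).totalDegree
        ≤ q.totalDegree + (r : MvPolynomial (Fin 2) ℝ).totalDegree := totalDegree_mul q _
      _ ≤ k + (n - k) := by rw [hq]; omega
      _ = n := by omega
  let J : V' →ₗ[ℝ] V :=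
    LinearMap.codRestrict V ((LinearMap.mulLeft ℝ q) ∘ₗ V'.subtype) hmul
  have hJval : ∀ r : V', ((J r : V) : MvPolynomial (Fin 2) ℝ) = q * r := fun r => rfl
  have hJinj : Function.Injective J := by
    intro r r' h
    have : q * (r : MvPolynomial (Fin 2) ℝ) = q * (r' : MvPolynomial (Fin 2) ℝ) := by
      rw [← hJval r, ← hJval r', h]
    exact Subtype.ext (mul_left_cancel₀ hq0 this)
  set K : Submodule ℝ V := LinearMap.range J with hKdef
  have hKle : K ≤ LinearMap.ker E := by
    rintro x ⟨r, rfl⟩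
    rw [LinearMap.mem_ker]
    funext A
    rw [hE, hJval]
    have h0 := hXq A.1 A.2
    simp only [evalPt, map_mul, Pi.zero_apply] at h0 ⊢
    rw [h0, zero_mul]
  -- surjectivity of E
  have hsurj : Function.Surjective E := by
    intro f
    choose P hP using fun A : ↥X => hInd A.1 A.2
    refine ⟨∑ A : ↥X, f A • ⟨P A, (mem_restrictTotalDegree _ _ _).mpr (hP A).1⟩, ?_⟩
    funext B
    rw [map_sum]
    simp only [Finset.sum_apply, map_smul, Pi.smul_apply]
    have hval : ∀ A : ↥X, E ⟨P A, (mem_restrictTotalDegree _ _ _).mpr (hP A).1⟩ B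
        = if A = B then 1 else 0 := by
      intro A
      rw [hE]
      by_cases hAB : A = B
      · subst hAB; simp [(hP A).2.1]
      · simp only [if_neg hAB]
        exact (hP A).2.2 B.1 B.2 (fun hc => hAB (Subtype.ext hc).symm)
    rw [Finset.sum_congr rfl (fun A _ => by rw [hval A])]
    simp
  -- the induced surjection from the quotient
  let Ebar := K.liftQ E hKle
  have hbar : Function.Surjective Ebar := by
    intro f
    obtain ⟨v, hv⟩ := hsurj f
    exact ⟨K.mkQ v, hv⟩
  have h1 : Fintype.card ↥X ≤ Module.finrank ℝ (V ⧸ K) := by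
    have heq : Module.finrank ℝ (↥X → ℝ) = Module.finrank ℝ ↥(LinearMap.range Ebar) := by
      rw [LinearMap.range_eq_top.mpr hbar, finrank_top]
    have hle : Module.finrank ℝ (↥X → ℝ) ≤ Module.finrank ℝ (V ⧸ K) :=
      heq ▸ LinearMap.finrank_range_le Ebar
    rwa [Module.finrank_pi] at hle
  have h2 := Submodule.finrank_quotient_add_finrank K
  have h3 : Module.finrank ℝ K = Module.finrank ℝ V' := LinearMap.finrank_range_of_inj hJinj
  have h4 : Module.finrank ℝ V = (n+1)*(n+2)/2 := finrank_rtd n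
  have h5 : Module.finrank ℝ V' = (n-k+1)*(n-k+2)/2 := finrank_rtd (n-k)
  have hXcard : Fintype.card ↥X = X.card := Fintype.card_coe X
  -- arithmetic
  obtain ⟨m, rfl⟩ := Nat.exists_eq_add_of_le hk
  have hid : (k+m+1)*(k+m+2) = (m+1)*(m+2) + k*(2*(k+m)+3-k) := by
    have hs : 2*(k+m)+3-k = k+2*m+3 := by omega
    rw [hs]; ring
  have hnk : k + m - k = m := by omega
  rw [hnk] at h5
  have he1 : (k+m+1)*(k+m+2)/2*2 = (k+m+1)*(k+m+2) :=
    Nat.div_mul_cancel (Nat.even_mul_succ_self (k+m+1)).two_dvd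
  have he2 : (m+1)*(m+2)/2*2 = (m+1)*(m+2) :=
    Nat.div_mul_cancel (Nat.even_mul_succ_self (m+1)).two_dvd
  have he3 : dd (k+m) k * 2 = k*(2*(k+m)+3-k) := by
    rw [dd]
    refine Nat.div_mul_cancel ?_
    rcases Nat.even_or_odd k with he | ho
    · exact Dvd.dvd.mul_right he.two_dvd _
    · obtain ⟨a, rfl⟩ := ho
      have : 2*(2*a+1+m)+3-(2*a+1) = 2*(a+m+2) := by omega
      rw [this]
      exact Dvd.dvd.mul_left ⟨a+m+2, by ring⟩ _
  omega
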